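/- arXiv:1707.09825 — 3 statements merged into one kernel-verified Lean document; each statement's English description precedes it below -/
import Mathlib

section
/- Let $H \in (1/2, 1)$, $\lambda \ge 0$ and $0 \le s < t$, and set $T := t - s$. Then $H(2H-1) \int_s^t \int_s^t e^{-\lambda(2t - u - v)} |u - v|^{2H-2} \, du \, dv = H\, T^{2H} \Big( e^{-2\lambda T} \int_0^1 e^{\lambda T u} u^{2H-1} \, du + \int_0^1 e^{-\lambda T u} u^{2H-1} \, du \Big)$. Equivalently, writing $\gamma^*(a,z) := \Gamma(a)^{-1} \int_0^1 u^{a-1} e^{-z u} \, du$, the left-hand side equals $H \Gamma(2H) T^{2H} \big( e^{-2\lambda T} \gamma^*(2H, -\lambda T) + \gamma^*(2H, \lambda T) \big)$. (This is the explicit variance formula of Proposition 4.3 for the fractional stochastic integral $\int_s^t e^{-\lambda(t-u)} dB^H(u)$ with Hurst index $H$.) -/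
open Real intervalIntegral MeasureTheory Set

/-- The (normalized) incomplete gamma function
`γ*(a, z) = Γ(a)⁻¹ ∫_0^1 u^{a-1} e^{-z u} du`. -/
noncomputable def incGamma (a z : ℝ) : ℝ :=
  (Real.Gamma a)⁻¹ * ∫ u in (0 : ℝ)..1, u ^ (a - 1) * Real.exp (-z * u)

namespace VFaux

noncomputable def Phi (a b z : ℝ) : ℝ := ∫ w in (0:ℝ)..z, Real.exp (b * w) * w ^ (a - 1)
noncomputable def Gf (a b z : ℝ) : ℝ := ∫ w in (0:ℝ)..z, Real.exp (b * w) * w ^ a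

variable {a : ℝ}

lemma contRpow (ha : 0 < a) : Continuous fun x : ℝ => x ^ a :=
  continuous_iff_continuousAt.2 fun x => Real.continuousAt_rpow_const x a (Or.inr ha.le)

lemma contExp (b : ℝ) : Continuous fun x : ℝ => Real.exp (b * x) :=
  Real.continuous_exp.comp (continuous_const.mul continuous_id)

lemma intSing (ha : 0 < a) (b z1 z2 : ℝ) :
    IntervalIntegrable (fun w => Real.exp (b * w) * w ^ (a - 1)) volume z1 z2 :=
  (intervalIntegrable_rpow' (by linarith)).continuousOn_mul (contExp b).continuousOn

lemma intReg (ha : 0 < a) (b z1 z2 : ℝ) :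
    IntervalIntegrable (fun w => Real.exp (b * w) * w ^ a) volume z1 z2 :=
  ((contExp b).mul (contRpow ha)).intervalIntegrable z1 z2

lemma contPhi (ha : 0 < a) (b : ℝ) : Continuous (Phi a b) :=
  intervalIntegral.continuous_primitive (fun z1 z2 => intSing ha b z1 z2) 0

lemma contG (ha : 0 < a) (b : ℝ) : Continuous (Gf a b) :=
  intervalIntegral.continuous_primitive (fun z1 z2 => intReg ha b z1 z2) 0

lemma hasDerivG (ha : 0 < a) (b z : ℝ) :
    HasDerivAt (Gf a b) (Real.exp (b * z) * z ^ a) z :=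
  intervalIntegral.integral_hasDerivAt_right (intReg ha b 0 z)
    (((contExp b).mul (contRpow ha)).stronglyMeasurable.stronglyMeasurableAtFilter)
    (((contExp b).mul (contRpow ha)).continuousAt)

lemma parts (ha : 0 < a) (b : ℝ) {z : ℝ} (hz : 0 ≤ z) :
    a * Phi a b z = Real.exp (b * z) * z ^ a - b * Gf a b z := by
  have key : (∫ w in (0:ℝ)..z,
      (b * (Real.exp (b * w) * w ^ a) + a * (Real.exp (b * w) * w ^ (a - 1))))
      = Real.exp (b * z) * z ^ a - Real.exp (b * 0) * (0:ℝ) ^ a := by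
    apply intervalIntegral.integral_eq_sub_of_hasDeriv_right_of_le hz
    · exact ((contExp b).mul (contRpow ha)).continuousOn
    · intro x hx
      have h1 : HasDerivAt (fun w => Real.exp (b * w)) (b * Real.exp (b * x)) x := by
        simpa [mul_comm] using ((hasDerivAt_id x).const_mul b).exp
      have h2 : HasDerivAt (fun w : ℝ => w ^ a) (a * x ^ (a - 1)) x :=
        Real.hasDerivAt_rpow_const (Or.inl (ne_of_gt hx.1))
      have h3 := h1.mul h2
      have : b * Real.exp (b * x) * x ^ a + Real.exp (b * x) * (a * x ^ (a - 1))
          = b * (Real.exp (b * x) * x ^ a) + a * (Real.exp (b * x) * x ^ (a - 1)) := by ring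
      rw [this] at h3
      exact h3.hasDerivWithinAt
    · exact ((intReg ha b 0 z).const_mul b).add ((intSing ha b 0 z).const_mul a)
  rw [intervalIntegral.integral_add ((intReg ha b 0 z).const_mul b)
      ((intSing ha b 0 z).const_mul a), intervalIntegral.integral_const_mul,
      intervalIntegral.integral_const_mul] at key
  have h0 : (0:ℝ) ^ a = 0 := Real.zero_rpow (ne_of_gt ha)
  rw [h0, mul_zero] at key
  unfold Phi Gf
  linarith


lemma ce1 (lam T : ℝ) : Continuous fun z : ℝ => Real.exp (-2 * lam * (T - z)) :=
  Real.continuous_exp.comp (continuous_const.mul (continuous_const.sub continuous_id))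

lemma ce2 (lam : ℝ) : Continuous fun z : ℝ => Real.exp (-2 * lam * z) :=
  Real.continuous_exp.comp (continuous_const.mul continuous_id)

lemma keyCancel (ha : 0 < a) (lam T : ℝ) :
    lam * ∫ z in (0:ℝ)..T, Real.exp (-2 * lam * (T - z)) * Gf a (-lam) z
      = lam * ∫ z in (0:ℝ)..T, Real.exp (-2 * lam * z) * Gf a lam z := by
  have hc1 : Continuous fun z : ℝ => Real.exp (-2 * lam * (T - z)) * Gf a (-lam) z :=
    (ce1 lam T).mul (contG ha (-lam))
  have hc2 : Continuous fun z : ℝ => Real.exp (-2 * lam * z) * Gf a lam z :=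
    (ce2 lam).mul (contG ha lam)
  have E1 : (∫ z in (0:ℝ)..T,
      (2 * lam * (Real.exp (-2 * lam * (T - z)) * Gf a (-lam) z)
        + Real.exp (-2 * lam * T) * (Real.exp (lam * z) * z ^ a)))
      = Gf a (-lam) T := by
    have := intervalIntegral.integral_eq_sub_of_hasDerivAt
      (f := fun z => Real.exp (-2 * lam * (T - z)) * Gf a (-lam) z)
      (f' := fun z => 2 * lam * (Real.exp (-2 * lam * (T - z)) * Gf a (-lam) z)
        + Real.exp (-2 * lam * T) * (Real.exp (lam * z) * z ^ a))
      (a := 0) (b := T) ?_ ?_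
    · rw [this]
      simp [Gf, intervalIntegral.integral_same]
    · intro z _
      have hE : HasDerivAt (fun z : ℝ => Real.exp (-2 * lam * (T - z)))
          (2 * lam * Real.exp (-2 * lam * (T - z))) z := by
        have := (((hasDerivAt_id z).const_sub T).const_mul (-2 * lam)).exp
        convert this using 1
        simp only [id_eq]
        ring_nf; rfl
      have h3 := hE.mul (hasDerivG ha (-lam) z)
      have heq : 2 * lam * Real.exp (-2 * lam * (T - z)) * Gf a (-lam) z
            + Real.exp (-2 * lam * (T - z)) * (Real.exp (-lam * z) * z ^ a)
          = 2 * lam * (Real.exp (-2 * lam * (T - z)) * Gf a (-lam) z)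
            + Real.exp (-2 * lam * T) * (Real.exp (lam * z) * z ^ a) := by
        have hx : Real.exp (-2 * lam * (T - z)) * Real.exp (-lam * z)
            = Real.exp (-2 * lam * T) * Real.exp (lam * z) := by
          rw [← Real.exp_add, ← Real.exp_add]; ring_nf
        linear_combination z ^ a * hx
      rw [heq] at h3
      exact h3
    · exact ((((continuous_const (y := (2*lam:ℝ))).mul hc1)).add
        (continuous_const.mul ((contExp lam).mul (contRpow ha)))).intervalIntegrable 0 T
  have E2 : (∫ z in (0:ℝ)..T,
      (-(2 * lam) * (Real.exp (-2 * lam * z) * Gf a lam z)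
        + Real.exp (-lam * z) * z ^ a))
      = Real.exp (-2 * lam * T) * Gf a lam T := by
    have := intervalIntegral.integral_eq_sub_of_hasDerivAt
      (f := fun z => Real.exp (-2 * lam * z) * Gf a lam z)
      (f' := fun z => -(2 * lam) * (Real.exp (-2 * lam * z) * Gf a lam z)
        + Real.exp (-lam * z) * z ^ a)
      (a := 0) (b := T) ?_ ?_
    · rw [this]
      simp [Gf, intervalIntegral.integral_same]
    · intro z _
      have hE : HasDerivAt (fun z : ℝ => Real.exp (-2 * lam * z))
          (-(2 * lam) * Real.exp (-2 * lam * z)) z := by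
        have := ((hasDerivAt_id z).const_mul (-2 * lam)).exp
        convert this using 1
        simp only [id_eq]
        ring_nf; rfl
      have h3 := hE.mul (hasDerivG ha lam z)
      have heq : -(2 * lam) * Real.exp (-2 * lam * z) * Gf a lam z
            + Real.exp (-2 * lam * z) * (Real.exp (lam * z) * z ^ a)
          = -(2 * lam) * (Real.exp (-2 * lam * z) * Gf a lam z)
            + Real.exp (-lam * z) * z ^ a := by
        have hx : Real.exp (-2 * lam * z) * Real.exp (lam * z) = Real.exp (-lam * z) := by
          rw [← Real.exp_add]; ring_nf
        linear_combination z ^ a * hx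
      rw [heq] at h3
      exact h3
    · exact ((((continuous_const (y := (-(2*lam):ℝ))).mul hc2)).add
        ((contExp (-lam)).mul (contRpow ha))).intervalIntegrable 0 T
  rw [intervalIntegral.integral_add (f := fun z => 2 * lam * (Real.exp (-2 * lam * (T - z)) * Gf a (-lam) z)) (g := fun z => Real.exp (-2 * lam * T) * (Real.exp (lam * z) * z ^ a)) ((((continuous_const (y := (2*lam:ℝ))).mul hc1)).intervalIntegrable 0 T)
      ((continuous_const.mul ((contExp lam).mul (contRpow ha))).intervalIntegrable 0 T),
    intervalIntegral.integral_const_mul, intervalIntegral.integral_const_mul] at E1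
  rw [intervalIntegral.integral_add (f := fun z => -(2 * lam) * (Real.exp (-2 * lam * z) * Gf a lam z)) (g := fun z => Real.exp (-lam * z) * z ^ a) ((((continuous_const (y := (-(2*lam):ℝ))).mul hc2)).intervalIntegrable 0 T)
      (((contExp (-lam)).mul (contRpow ha)).intervalIntegrable 0 T),
    intervalIntegral.integral_const_mul] at E2
  have hG1 : (∫ z in (0:ℝ)..T, Real.exp (lam * z) * z ^ a) = Gf a lam T := rfl
  have hG2 : (∫ z in (0:ℝ)..T, Real.exp (-lam * z) * z ^ a) = Gf a (-lam) T := rfl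
  rw [hG1] at E1
  rw [hG2] at E2
  linarith


lemma reduced (ha : 0 < a) (lam T : ℝ) (hT : 0 ≤ T) :
    a * ((∫ z in (0:ℝ)..T, Real.exp (-2 * lam * (T - z)) * Phi a (-lam) z)
       + ∫ z in (0:ℝ)..T, Real.exp (-2 * lam * z) * Phi a lam z)
      = Real.exp (-2 * lam * T) * Gf a lam T + Gf a (-lam) T := by
  have hc1 : Continuous fun z : ℝ => Real.exp (-2 * lam * (T - z)) * Gf a (-lam) z :=
    (ce1 lam T).mul (contG ha (-lam))
  have hc2 : Continuous fun z : ℝ => Real.exp (-2 * lam * z) * Gf a lam z :=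
    (ce2 lam).mul (contG ha lam)
  have step1 : a * (∫ z in (0:ℝ)..T, Real.exp (-2 * lam * (T - z)) * Phi a (-lam) z)
      = Real.exp (-2 * lam * T) * Gf a lam T
        + lam * ∫ z in (0:ℝ)..T, Real.exp (-2 * lam * (T - z)) * Gf a (-lam) z := by
    rw [← intervalIntegral.integral_const_mul]
    have hcongr : (∫ z in (0:ℝ)..T, a * (Real.exp (-2 * lam * (T - z)) * Phi a (-lam) z))
        = ∫ z in (0:ℝ)..T, (Real.exp (-2 * lam * T) * (Real.exp (lam * z) * z ^ a)
            + lam * (Real.exp (-2 * lam * (T - z)) * Gf a (-lam) z)) := by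
      apply intervalIntegral.integral_congr
      intro z hz
      rw [uIcc_of_le hT] at hz
      have hp := parts ha (-lam) hz.1
      have hx : Real.exp (-2 * lam * (T - z)) * Real.exp (-lam * z)
          = Real.exp (-2 * lam * T) * Real.exp (lam * z) := by
        rw [← Real.exp_add, ← Real.exp_add]; ring_nf
      have : a * Phi a (-lam) z = Real.exp (-lam * z) * z ^ a + lam * Gf a (-lam) z := by
        rw [hp]; ring
      dsimp only
      linear_combination Real.exp (-2 * lam * (T - z)) * this + z ^ a * hx
    rw [hcongr, intervalIntegral.integral_add (f := fun z => Real.exp (-2 * lam * T) * (Real.exp (lam * z) * z ^ a)) (g := fun z => lam * (Real.exp (-2 * lam * (T - z)) * Gf a (-lam) z))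
        ((continuous_const.mul ((contExp lam).mul (contRpow ha))).intervalIntegrable 0 T)
        (((continuous_const (y := lam)).mul hc1).intervalIntegrable 0 T),
      intervalIntegral.integral_const_mul, intervalIntegral.integral_const_mul]
    rfl
  have step2 : a * (∫ z in (0:ℝ)..T, Real.exp (-2 * lam * z) * Phi a lam z)
      = Gf a (-lam) T
        - lam * ∫ z in (0:ℝ)..T, Real.exp (-2 * lam * z) * Gf a lam z := by
    rw [← intervalIntegral.integral_const_mul]
    have hcongr : (∫ z in (0:ℝ)..T, a * (Real.exp (-2 * lam * z) * Phi a lam z))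
        = ∫ z in (0:ℝ)..T, (Real.exp (-lam * z) * z ^ a
            - lam * (Real.exp (-2 * lam * z) * Gf a lam z)) := by
      apply intervalIntegral.integral_congr
      intro z hz
      rw [uIcc_of_le hT] at hz
      have hp := parts ha lam hz.1
      have hx : Real.exp (-2 * lam * z) * Real.exp (lam * z) = Real.exp (-lam * z) := by
        rw [← Real.exp_add]; ring_nf
      dsimp only
      linear_combination Real.exp (-2 * lam * z) * hp + z ^ a * hx
    rw [hcongr, intervalIntegral.integral_sub (f := fun z => Real.exp (-lam * z) * z ^ a) (g := fun z => lam * (Real.exp (-2 * lam * z) * Gf a lam z))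
        (((contExp (-lam)).mul (contRpow ha)).intervalIntegrable 0 T)
        (((continuous_const (y := lam)).mul hc2).intervalIntegrable 0 T),
      intervalIntegral.integral_const_mul]
    rfl
  rw [mul_add, step1, step2]
  have := keyCancel ha lam T
  linarith


lemma inner_eq (ha : 0 < a) (lam s t u : ℝ) (hu : u ∈ Icc s t) :
    (∫ v in s..t, Real.exp (-lam * (2 * t - u - v)) * |u - v| ^ (a - 1))
      = Real.exp (-2 * lam * (t - u)) * Phi a (-lam) (u - s)
        + Real.exp (-2 * lam * (t - u)) * Phi a lam (t - u) := by
  set f1 : ℝ → ℝ := fun w => Real.exp (-2 * lam * (t - u)) * (Real.exp (-lam * w) * w ^ (a - 1))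
    with hf1
  set f2 : ℝ → ℝ := fun w => Real.exp (-2 * lam * (t - u)) * (Real.exp (lam * w) * w ^ (a - 1))
    with hf2
  have claimA : EqOn (fun v => Real.exp (-lam * (2 * t - u - v)) * |u - v| ^ (a - 1))
      (fun v => f1 (u - v)) (uIcc s u) := by
    intro v hv
    rw [uIcc_of_le hu.1] at hv
    have habs : |u - v| = u - v := abs_of_nonneg (sub_nonneg.2 hv.2)
    have hexp : Real.exp (-lam * (2 * t - u - v))
        = Real.exp (-2 * lam * (t - u)) * Real.exp (-lam * (u - v)) := by
      rw [← Real.exp_add]; ring_nf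
    simp only [hf1, habs]
    rw [hexp]; ring
  have claimB : EqOn (fun v => Real.exp (-lam * (2 * t - u - v)) * |u - v| ^ (a - 1))
      (fun v => f2 (v - u)) (uIcc u t) := by
    intro v hv
    rw [uIcc_of_le hu.2] at hv
    have habs : |u - v| = v - u := by
      rw [abs_sub_comm]; exact abs_of_nonneg (sub_nonneg.2 hv.1)
    have hexp : Real.exp (-lam * (2 * t - u - v))
        = Real.exp (-2 * lam * (t - u)) * Real.exp (lam * (v - u)) := by
      rw [← Real.exp_add]; ring_nf
    simp only [hf2, habs]
    rw [hexp]; ring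
  have hbase1 : IntervalIntegrable f1 volume 0 (u - s) :=
    (intSing ha (-lam) 0 (u - s)).const_mul _
  have hbase2 : IntervalIntegrable f2 volume 0 (t - u) :=
    (intSing ha lam 0 (t - u)).const_mul _
  have h1comp : IntervalIntegrable (fun v => f1 (u - v)) volume s u := by
    have := hbase1.comp_sub_left u
    rw [sub_zero, sub_sub_cancel] at this
    exact this.symm
  have h2comp : IntervalIntegrable (fun v => f2 (v - u)) volume u t := by
    have := hbase2.comp_sub_right u
    rw [zero_add, sub_add_cancel] at this
    exact this
  have h1int : IntervalIntegrable
      (fun v => Real.exp (-lam * (2 * t - u - v)) * |u - v| ^ (a - 1)) volume s u := by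
    apply h1comp.congr
    intro v hv
    exact (claimA (uIoc_subset_uIcc hv)).symm
  have h2int : IntervalIntegrable
      (fun v => Real.exp (-lam * (2 * t - u - v)) * |u - v| ^ (a - 1)) volume u t := by
    apply h2comp.congr
    intro v hv
    exact (claimB (uIoc_subset_uIcc hv)).symm
  rw [← intervalIntegral.integral_add_adjacent_intervals h1int h2int]
  have hv1 : (∫ v in s..u, Real.exp (-lam * (2 * t - u - v)) * |u - v| ^ (a - 1))
      = Real.exp (-2 * lam * (t - u)) * Phi a (-lam) (u - s) := by
    rw [intervalIntegral.integral_congr claimA, intervalIntegral.integral_comp_sub_left f1 u,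
      sub_self]
    simp only [hf1]
    rw [intervalIntegral.integral_const_mul]
    rfl
  have hv2 : (∫ v in u..t, Real.exp (-lam * (2 * t - u - v)) * |u - v| ^ (a - 1))
      = Real.exp (-2 * lam * (t - u)) * Phi a lam (t - u) := by
    rw [intervalIntegral.integral_congr claimB, intervalIntegral.integral_comp_sub_right f2 u,
      sub_self]
    simp only [hf2]
    rw [intervalIntegral.integral_const_mul]
    rfl
  rw [hv1, hv2]


lemma rhsSub (ha : 0 < a) (lam T : ℝ) (hT : 0 < T) :
    T ^ (a + 1) * (∫ u in (0:ℝ)..1, Real.exp (lam * T * u) * u ^ a) = Gf a lam T := by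
  have h1 : (∫ u in (0:ℝ)..1, Real.exp (lam * (T * u)) * (T * u) ^ a)
      = T⁻¹ • ∫ w in (T * 0)..(T * 1), Real.exp (lam * w) * w ^ a :=
    intervalIntegral.integral_comp_mul_left (fun w => Real.exp (lam * w) * w ^ a) hT.ne'
  rw [mul_zero, mul_one, smul_eq_mul] at h1
  have h2 : (∫ u in (0:ℝ)..1, Real.exp (lam * (T * u)) * (T * u) ^ a)
      = T ^ a * ∫ u in (0:ℝ)..1, Real.exp (lam * T * u) * u ^ a := by
    rw [← intervalIntegral.integral_const_mul]
    apply intervalIntegral.integral_congr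
    intro u hu
    rw [uIcc_of_le (zero_le_one)] at hu
    have hmr : (T * u) ^ a = T ^ a * u ^ a := Real.mul_rpow hT.le hu.1
    dsimp only
    rw [hmr, ← mul_assoc lam]
    ring
  have h4 : (∫ w in (0:ℝ)..T, Real.exp (lam * w) * w ^ a) = Gf a lam T := rfl
  rw [h4, h2] at h1
  have h3 : T ^ (a + 1) = T * T ^ a := by
    rw [Real.rpow_add hT, Real.rpow_one]; ring
  rw [h3, mul_assoc, h1, ← mul_assoc, mul_inv_cancel₀ hT.ne', one_mul]

end VFaux


open VFaux in
/-- Explicit variance formula of Proposition 4.3 for the fractional stochastic integral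
`∫_s^t e^{-λ(t-u)} dB^H(u)` with Hurst index `H`. -/
theorem variance_formula (H lam s t : ℝ) (hH : H ∈ Set.Ioo (1/2 : ℝ) 1)
    (hlam : 0 ≤ lam) (hs : 0 ≤ s) (hst : s < t) :
    (H * (2 * H - 1) *
        ∫ u in s..t, ∫ v in s..t,
          Real.exp (-lam * (2 * t - u - v)) * |u - v| ^ (2 * H - 2)) =
      H * (t - s) ^ (2 * H) *
        (Real.exp (-2 * lam * (t - s)) *
            (∫ u in (0 : ℝ)..1, Real.exp (lam * (t - s) * u) * u ^ (2 * H - 1)) +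
          ∫ u in (0 : ℝ)..1, Real.exp (-lam * (t - s) * u) * u ^ (2 * H - 1)) ∧
    (H * (2 * H - 1) *
        ∫ u in s..t, ∫ v in s..t,
          Real.exp (-lam * (2 * t - u - v)) * |u - v| ^ (2 * H - 2)) =
      H * Real.Gamma (2 * H) * (t - s) ^ (2 * H) *
        (Real.exp (-2 * lam * (t - s)) * incGamma (2 * H) (-lam * (t - s)) +
          incGamma (2 * H) (lam * (t - s))) := by
  obtain ⟨hH1, hH2⟩ := hH
  have ha : (0:ℝ) < 2 * H - 1 := by linarith
  have hT : (0:ℝ) < t - s := by linarith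
  have heH : (2 * H : ℝ) = (2 * H - 1) + 1 := by ring
  have hmain : ((2 * H - 1) *
      ∫ u in s..t, ∫ v in s..t, Real.exp (-lam * (2 * t - u - v)) * |u - v| ^ (2 * H - 2))
      = Real.exp (-2 * lam * (t - s)) * Gf (2*H-1) lam (t - s)
        + Gf (2*H-1) (-lam) (t - s) := by
    have houter : (∫ u in s..t, ∫ v in s..t,
        Real.exp (-lam * (2 * t - u - v)) * |u - v| ^ (2 * H - 2))
        = ∫ u in s..t, (Real.exp (-2 * lam * (t - u)) * Phi (2*H-1) (-lam) (u - s)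
            + Real.exp (-2 * lam * (t - u)) * Phi (2*H-1) lam (t - u)) := by
      apply intervalIntegral.integral_congr
      intro u hu
      rw [uIcc_of_le hst.le] at hu
      have he2 : (2 * H - 2 : ℝ) = (2 * H - 1) - 1 := by ring
      simp only [he2]
      exact inner_eq ha lam s t u hu
    rw [houter]
    have c1 : Continuous fun u : ℝ =>
        Real.exp (-2 * lam * (t - u)) * Phi (2*H-1) (-lam) (u - s) :=
      (ce1 lam t).mul ((contPhi ha (-lam)).comp (continuous_id.sub continuous_const))
    have c2 : Continuous fun u : ℝ =>
        Real.exp (-2 * lam * (t - u)) * Phi (2*H-1) lam (t - u) :=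
      (ce1 lam t).mul ((contPhi ha lam).comp (continuous_const.sub continuous_id))
    rw [intervalIntegral.integral_add (c1.intervalIntegrable s t) (c2.intervalIntegrable s t)]
    have hsub1 : (∫ u in s..t, Real.exp (-2 * lam * (t - u)) * Phi (2*H-1) (-lam) (u - s))
        = ∫ z in (0:ℝ)..(t - s), Real.exp (-2 * lam * ((t - s) - z)) * Phi (2*H-1) (-lam) z := by
      have hcg : (∫ u in s..t, Real.exp (-2 * lam * (t - u)) * Phi (2*H-1) (-lam) (u - s))
          = ∫ u in s..t,
            (fun z => Real.exp (-2 * lam * ((t - s) - z)) * Phi (2*H-1) (-lam) z) (u - s) := by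
        apply intervalIntegral.integral_congr
        intro u _
        dsimp only
        congr 2
        ring
      rw [hcg, intervalIntegral.integral_comp_sub_right
        (fun z => Real.exp (-2 * lam * ((t - s) - z)) * Phi (2*H-1) (-lam) z) s, sub_self]
    have hsub2 : (∫ u in s..t, Real.exp (-2 * lam * (t - u)) * Phi (2*H-1) lam (t - u))
        = ∫ z in (0:ℝ)..(t - s), Real.exp (-2 * lam * z) * Phi (2*H-1) lam z := by
      have h := intervalIntegral.integral_comp_sub_left (a := s) (b := t)
        (fun z => Real.exp (-2 * lam * z) * Phi (2*H-1) lam z) t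
      rw [sub_self] at h
      exact h
    rw [hsub1, hsub2]
    exact reduced ha lam (t - s) hT.le
  have hA1 : (t - s) ^ (2*H) * (∫ u in (0:ℝ)..1, Real.exp (lam * (t - s) * u) * u ^ (2*H-1))
      = Gf (2*H-1) lam (t - s) := by
    have h := rhsSub ha lam (t - s) hT
    rw [← heH] at h
    exact h
  have hA2 : (t - s) ^ (2*H) * (∫ u in (0:ℝ)..1, Real.exp (-lam * (t - s) * u) * u ^ (2*H-1))
      = Gf (2*H-1) (-lam) (t - s) := by
    have h := rhsSub ha (-lam) (t - s) hT
    rw [← heH] at h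
    exact h
  have goal1 : (H * (2 * H - 1) *
        ∫ u in s..t, ∫ v in s..t,
          Real.exp (-lam * (2 * t - u - v)) * |u - v| ^ (2 * H - 2)) =
      H * (t - s) ^ (2 * H) *
        (Real.exp (-2 * lam * (t - s)) *
            (∫ u in (0 : ℝ)..1, Real.exp (lam * (t - s) * u) * u ^ (2 * H - 1)) +
          ∫ u in (0 : ℝ)..1, Real.exp (-lam * (t - s) * u) * u ^ (2 * H - 1)) := by
    rw [mul_assoc, hmain]
    linear_combination (-H) * Real.exp (-2 * lam * (t - s)) * hA1 - H * hA2
  refine ⟨goal1, ?_⟩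
  rw [goal1]
  have hΓ : 0 < Real.Gamma (2 * H) := Real.Gamma_pos_of_pos (by linarith)
  have hinc1 : Real.Gamma (2*H) * incGamma (2*H) (-lam * (t - s))
      = ∫ u in (0:ℝ)..1, Real.exp (lam * (t - s) * u) * u ^ (2*H-1) := by
    unfold incGamma
    rw [← mul_assoc, mul_inv_cancel₀ hΓ.ne', one_mul]
    apply intervalIntegral.integral_congr
    intro u _
    dsimp only
    rw [mul_comm]
    congr 2
    ring
  have hinc2 : Real.Gamma (2*H) * incGamma (2*H) (lam * (t - s))
      = ∫ u in (0:ℝ)..1, Real.exp (-lam * (t - s) * u) * u ^ (2*H-1) := by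
    unfold incGamma
    rw [← mul_assoc, mul_inv_cancel₀ hΓ.ne', one_mul]
    apply intervalIntegral.integral_congr
    intro u _
    dsimp only
    rw [mul_comm]
    congr 2
    ring
  linear_combination (-H) * (t - s) ^ (2*H) * Real.exp (-2 * lam * (t - s)) * hinc1
    - H * (t - s) ^ (2*H) * hinc2
end

section
/- Let $H \in (1/2, 1)$. There exists a constant $C > 0$ depending only on $H$ such that for all $\lambda \ge 0$, all $t \ge 0$ and all $h > 0$, $\big| \sigma_\lambda^H(t+h) - \sigma_\lambda^H(t) \big| \le C \big( 1 + \lambda\, t^{H} h^{1-H} \big) h^{H}$. (This is part (ii) of Proposition 4.4, stated for the explicit standard-deviation function $\sigma_\lambda^H$.) -/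
open Real intervalIntegral

/-- The standard deviation `σ_λ^H(t)` of the fractional stochastic integral
`∫_0^t e^{-λ(t-u)} dB^H(u)`. -/
noncomputable def sigmaH (H lam t : ℝ) : ℝ :=
  Real.sqrt (H * t ^ (2 * H) *
    (Real.exp (-2 * lam * t) * (∫ u in (0 : ℝ)..1, Real.exp (lam * t * u) * u ^ (2 * H - 1)) +
      ∫ u in (0 : ℝ)..1, Real.exp (-lam * t * u) * u ^ (2 * H - 1)))

namespace SigmaHAux

/-- The generic parametric integral `∫_0^1 e^{-x c(u)} u^{2H-1} du`. -/
noncomputable def J (H x : ℝ) (c : ℝ → ℝ) : ℝ :=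
  ∫ u in (0 : ℝ)..1, Real.exp (-(x * c u)) * u ^ (2 * H - 1)

lemma cont_integrand {H : ℝ} (hH : (1:ℝ)/2 < H) (x : ℝ) {c : ℝ → ℝ} (hc : Continuous c) :
    Continuous fun u : ℝ => Real.exp (-(x * c u)) * u ^ (2 * H - 1) := by
  have h1 : (0:ℝ) ≤ 2 * H - 1 := by linarith
  exact (Real.continuous_exp.comp (continuous_const.mul hc).neg).mul
    (Real.continuous_rpow_const h1)

lemma intg {H : ℝ} (hH : (1:ℝ)/2 < H) (x : ℝ) {c : ℝ → ℝ} (hc : Continuous c) :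
    IntervalIntegrable (fun u : ℝ => Real.exp (-(x * c u)) * u ^ (2 * H - 1))
      MeasureTheory.volume 0 1 :=
  (cont_integrand hH x hc).intervalIntegrable 0 1

lemma rpow_intg {H : ℝ} (hH : (1:ℝ)/2 < H) :
    IntervalIntegrable (fun u : ℝ => u ^ (2 * H - 1)) MeasureTheory.volume 0 1 :=
  (Real.continuous_rpow_const (by linarith)).intervalIntegrable 0 1

lemma integral_rpow_eq {H : ℝ} (hH : (1:ℝ)/2 < H) :
    (∫ u in (0:ℝ)..1, u ^ (2 * H - 1)) = 1 / (2 * H) := by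
  rw [integral_rpow (Or.inl (by linarith))]
  rw [show 2 * H - 1 + 1 = 2 * H by ring]
  rw [Real.one_rpow, Real.zero_rpow (by positivity)]
  norm_num

lemma J_nonneg {H : ℝ} (hH : (1:ℝ)/2 < H) (x : ℝ) {c : ℝ → ℝ} : 0 ≤ J H x c := by
  apply intervalIntegral.integral_nonneg (by norm_num)
  intro u hu
  have : (0:ℝ) ≤ u ^ (2 * H - 1) := Real.rpow_nonneg hu.1 _
  positivity

lemma J_le {H : ℝ} (hH : (1:ℝ)/2 < H) {x : ℝ} (hx : 0 ≤ x) {c : ℝ → ℝ} (hc : Continuous c)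
    (hc0 : ∀ u ∈ Set.Icc (0:ℝ) 1, 0 ≤ c u) : J H x c ≤ 1 / (2 * H) := by
  rw [← integral_rpow_eq hH]
  apply intervalIntegral.integral_mono_on (by norm_num) (intg hH x hc) (rpow_intg hH)
  intro u hu
  have h1 : Real.exp (-(x * c u)) ≤ 1 := by
    rw [Real.exp_le_one_iff]
    have := hc0 u hu
    nlinarith
  have h2 : (0:ℝ) ≤ u ^ (2 * H - 1) := Real.rpow_nonneg hu.1 _
  nlinarith

lemma J_anti {H : ℝ} (hH : (1:ℝ)/2 < H) {x y : ℝ} (hx : 0 ≤ x) (hxy : x ≤ y)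
    {c : ℝ → ℝ} (hc : Continuous c) (hc0 : ∀ u ∈ Set.Icc (0:ℝ) 1, 0 ≤ c u) :
    J H y c ≤ J H x c := by
  apply intervalIntegral.integral_mono_on (by norm_num) (intg hH y hc) (intg hH x hc)
  intro u hu
  have h2 : (0:ℝ) ≤ u ^ (2 * H - 1) := Real.rpow_nonneg hu.1 _
  have : Real.exp (-(y * c u)) ≤ Real.exp (-(x * c u)) := by
    apply Real.exp_le_exp.2
    have := hc0 u hu
    nlinarith
  nlinarith

lemma J_lip {H : ℝ} (hH : (1:ℝ)/2 < H) {x y : ℝ} (hx : 0 ≤ x) (hxy : x ≤ y)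
    {c : ℝ → ℝ} (hc : Continuous c) (hc0 : ∀ u ∈ Set.Icc (0:ℝ) 1, 0 ≤ c u ∧ c u ≤ 2) :
    J H x c - J H y c ≤ 2 * (y - x) * J H x c := by
  have key : J H x c - J H y c = ∫ u in (0:ℝ)..1,
      (Real.exp (-(x * c u)) * u ^ (2 * H - 1) - Real.exp (-(y * c u)) * u ^ (2 * H - 1)) := by
    unfold J
    rw [intervalIntegral.integral_sub (intg hH x hc) (intg hH y hc)]
  rw [key]
  have h2c : 2 * (y - x) * J H x c = ∫ u in (0:ℝ)..1,
      2 * (y - x) * (Real.exp (-(x * c u)) * u ^ (2 * H - 1)) := by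
    rw [intervalIntegral.integral_const_mul]; rfl
  rw [h2c]
  apply intervalIntegral.integral_mono_on (by norm_num)
    ((intg hH x hc).sub (intg hH y hc))
    ((continuous_const.mul (cont_integrand hH x hc)).intervalIntegrable 0 1)
  intro u hu
  have h2 : (0:ℝ) ≤ u ^ (2 * H - 1) := Real.rpow_nonneg hu.1 _
  have hcu := hc0 u hu
  have hkey : Real.exp (-(x * c u)) - Real.exp (-(y * c u)) ≤
      2 * (y - x) * Real.exp (-(x * c u)) := by
    have hsplit : Real.exp (-(y * c u)) = Real.exp (-(x * c u)) *
        Real.exp (-((y - x) * c u)) := by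
      rw [← Real.exp_add]; ring_nf
    have h3 : 1 - ((y - x) * c u) ≤ Real.exp (-((y - x) * c u)) := by
      have := Real.add_one_le_exp (-((y - x) * c u))
      linarith
    have h4 : (y - x) * c u ≤ 2 * (y - x) := by nlinarith [hcu.2]
    have h5 : (0:ℝ) < Real.exp (-(x * c u)) := Real.exp_pos _
    rw [hsplit]
    nlinarith
  simp only [Pi.mul_apply]
  nlinarith

/-- The "normalized variance" `S H x = H (∫ e^{-x(2-u)}u^{2H-1} + ∫ e^{-xu}u^{2H-1})`. -/
noncomputable def S (H x : ℝ) : ℝ := H * (J H x (fun u => 2 - u) + J H x (fun u => u))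

lemma c1_cont : Continuous fun u : ℝ => 2 - u := continuous_const.sub continuous_id
lemma c2_cont : Continuous fun u : ℝ => u := continuous_id

lemma c1_bdd : ∀ u ∈ Set.Icc (0:ℝ) 1, 0 ≤ 2 - u ∧ 2 - u ≤ 2 := by
  rintro u ⟨h0, h1⟩; constructor <;> linarith
lemma c2_bdd : ∀ u ∈ Set.Icc (0:ℝ) 1, 0 ≤ u ∧ u ≤ 2 := by
  rintro u ⟨h0, h1⟩; constructor <;> linarith

lemma S_nonneg {H : ℝ} (hH : (1:ℝ)/2 < H) (x : ℝ) : 0 ≤ S H x := by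
  have h1 := J_nonneg hH x (c := fun u => 2 - u)
  have h2 := J_nonneg hH x (c := fun u => u)
  have : (0:ℝ) < H := by linarith
  unfold S; positivity

lemma S_le_one {H : ℝ} (hH : (1:ℝ)/2 < H) {x : ℝ} (hx : 0 ≤ x) : S H x ≤ 1 := by
  have h1 := J_le hH hx c1_cont (fun u hu => (c1_bdd u hu).1)
  have h2 := J_le hH hx c2_cont (fun u hu => (c2_bdd u hu).1)
  have hHpos : (0:ℝ) < H := by linarith
  unfold S
  have : J H x (fun u => 2 - u) + J H x (fun u => u) ≤ 1 / H := by
    have : 1 / (2 * H) + 1 / (2 * H) = 1 / H := by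
      rw [← add_div, show (1:ℝ) + 1 = 2 by norm_num,
        div_eq_div_iff (by positivity) hHpos.ne']
      ring
    linarith
  calc H * (J H x (fun u => 2 - u) + J H x (fun u => u)) ≤ H * (1 / H) := by
        exact mul_le_mul_of_nonneg_left this hHpos.le
    _ = 1 := by rw [mul_one_div, div_self hHpos.ne']

lemma S_anti {H : ℝ} (hH : (1:ℝ)/2 < H) {x y : ℝ} (hx : 0 ≤ x) (hxy : x ≤ y) :
    S H y ≤ S H x := by
  have h1 := J_anti hH hx hxy c1_cont (fun u hu => (c1_bdd u hu).1)
  have h2 := J_anti hH hx hxy c2_cont (fun u hu => (c2_bdd u hu).1)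
  have hHpos : (0:ℝ) < H := by linarith
  unfold S; nlinarith

lemma S_lip {H : ℝ} (hH : (1:ℝ)/2 < H) {x y : ℝ} (hx : 0 ≤ x) (hxy : x ≤ y) :
    S H x - S H y ≤ 2 * (y - x) * S H x := by
  have h1 := J_lip hH hx hxy c1_cont c1_bdd
  have h2 := J_lip hH hx hxy c2_cont c2_bdd
  have hHpos : (0:ℝ) < H := by linarith
  unfold S; nlinarith

/-- The key square-root estimate. -/
lemma sqrt_diff_le {a b d : ℝ} (hb : 0 ≤ b) (hba : b ≤ a) (ha1 : a ≤ 1)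
    (hlip : a - b ≤ d * a) (hd : 0 ≤ d) :
    Real.sqrt a - Real.sqrt b ≤ d := by
  have ha : (0:ℝ) ≤ a := le_trans hb hba
  have hsa1 : Real.sqrt a ≤ 1 := Real.sqrt_le_one.2 ha1
  have hsb : 0 ≤ Real.sqrt b := Real.sqrt_nonneg b
  rcases le_or_gt 1 d with hd1 | hd1
  · have : Real.sqrt a - Real.sqrt b ≤ Real.sqrt a := by linarith
    linarith
  · -- d < 1 : (1-d) √a ≤ √b
    have h1d : (0:ℝ) ≤ 1 - d := by linarith
    have hsqa : (Real.sqrt a) ^ 2 = a := Real.sq_sqrt ha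
    have hkey : (1 - d) * Real.sqrt a ≤ Real.sqrt b := by
      rw [Real.le_sqrt (by positivity) hb]
      have : ((1 - d) * Real.sqrt a) ^ 2 = (1 - d) ^ 2 * a := by
        rw [mul_pow, hsqa]
      rw [this]
      nlinarith
    have hsa : 0 ≤ Real.sqrt a := Real.sqrt_nonneg a
    nlinarith

/-- `(t+h)^H ≤ t^H + h^H` for `H ∈ [0,1]`. -/
lemma rpow_add_le_add_rpow' {t h H : ℝ} (ht : 0 ≤ t) (hh : 0 ≤ h) (h0 : 0 ≤ H) (h1 : H ≤ 1) :
    (t + h) ^ H ≤ t ^ H + h ^ H := by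
  have key := NNReal.rpow_add_le_add_rpow (Real.toNNReal t) (Real.toNNReal h) h0 h1
  have hco : ((Real.toNNReal t + Real.toNNReal h : NNReal) : ℝ) = t + h := by
    push_cast
    rw [Real.coe_toNNReal _ ht, Real.coe_toNNReal _ hh]
  calc (t + h) ^ H = ((Real.toNNReal t + Real.toNNReal h : NNReal) : ℝ) ^ H := by rw [hco]
    _ = (((Real.toNNReal t + Real.toNNReal h) ^ H : NNReal) : ℝ) := by
        rw [NNReal.coe_rpow]
    _ ≤ (((Real.toNNReal t) ^ H + (Real.toNNReal h) ^ H : NNReal) : ℝ) := by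
        exact_mod_cast key
    _ = t ^ H + h ^ H := by
        push_cast [NNReal.coe_rpow]
        rw [Real.coe_toNNReal _ ht, Real.coe_toNNReal _ hh]

/-- The factorization `σ_λ^H(t) = t^H √(S H (λ t))`. -/
lemma sigmaH_eq {H : ℝ} (hH : (1:ℝ)/2 < H) {lam t : ℝ} (ht : 0 ≤ t) :
    sigmaH H lam t = t ^ H * Real.sqrt (S H (lam * t)) := by
  have hA : Real.exp (-2 * lam * t) *
      (∫ u in (0:ℝ)..1, Real.exp (lam * t * u) * u ^ (2 * H - 1)) =
      J H (lam * t) (fun u => 2 - u) := by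
    unfold J
    rw [← intervalIntegral.integral_const_mul]
    apply intervalIntegral.integral_congr
    intro u _
    simp only
    rw [← mul_assoc, ← Real.exp_add]
    ring_nf
  have hB : (∫ u in (0:ℝ)..1, Real.exp (-lam * t * u) * u ^ (2 * H - 1)) =
      J H (lam * t) (fun u => u) := by
    unfold J
    apply intervalIntegral.integral_congr
    intro u _
    simp only
    ring_nf
  unfold sigmaH
  rw [hA, hB]
  have hfact : H * t ^ (2 * H) * (J H (lam * t) (fun u => 2 - u) + J H (lam * t) fun u => u)
      = t ^ (2 * H) * S H (lam * t) := by
    unfold S; ring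
  rw [hfact, Real.sqrt_mul (Real.rpow_nonneg ht _)]
  congr 1
  have h2H : t ^ (2 * H) = (t ^ H) ^ 2 := by
    rw [show (2:ℝ) * H = H * 2 by ring, Real.rpow_mul ht]
    rw [show ((2:ℝ) : ℝ) = ((2:ℕ) : ℝ) by norm_num, Real.rpow_natCast]
  rw [h2H, Real.sqrt_sq (Real.rpow_nonneg ht _)]

end SigmaHAux

open SigmaHAux in
/-- Part (ii) of Proposition 4.4, stated for the explicit standard-deviation
function `σ_λ^H`. -/
theorem sigmaH_increment_le (H : ℝ) (hH : H ∈ Set.Ioo (1/2 : ℝ) 1) :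
    ∃ C > (0 : ℝ), ∀ lam ≥ (0 : ℝ), ∀ t ≥ (0 : ℝ), ∀ h > (0 : ℝ),
      |sigmaH H lam (t + h) - sigmaH H lam t| ≤
        C * (1 + lam * t ^ H * h ^ (1 - H)) * h ^ H := by
  obtain ⟨hH1, hH2⟩ := hH
  refine ⟨2, by norm_num, ?_⟩
  intro lam hlam t ht h hh
  have hth : (0:ℝ) ≤ t + h := by linarith
  have hx : (0:ℝ) ≤ lam * t := mul_nonneg hlam ht
  have hxy : lam * t ≤ lam * (t + h) := by nlinarith
  set x := lam * t with hxdef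
  set y := lam * (t + h) with hydef
  set gx := Real.sqrt (S H x) with hgx
  set gy := Real.sqrt (S H y) with hgy
  rw [sigmaH_eq hH1 hth, sigmaH_eq hH1 ht]
  -- basic bounds
  have hgy_nonneg : 0 ≤ gy := Real.sqrt_nonneg _
  have hgx_nonneg : 0 ≤ gx := Real.sqrt_nonneg _
  have hS_anti : S H y ≤ S H x := S_anti hH1 hx hxy
  have hgyx : gy ≤ gx := Real.sqrt_le_sqrt hS_anti
  have hgy_le_one : gy ≤ 1 := by
    rw [hgy, Real.sqrt_le_one]
    exact S_le_one hH1 (le_trans hx hxy)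
  have hg_lip : gx - gy ≤ 2 * (y - x) := by
    exact sqrt_diff_le (S_nonneg hH1 y) hS_anti (S_le_one hH1 hx)
      (S_lip hH1 hx hxy) (by linarith)
  -- powers
  have htH : (0:ℝ) ≤ t ^ H := Real.rpow_nonneg ht _
  have hthH : t ^ H ≤ (t + h) ^ H :=
    Real.rpow_le_rpow ht (by linarith) (by linarith)
  have hpow : (t + h) ^ H - t ^ H ≤ h ^ H :=
    by have := rpow_add_le_add_rpow' ht hh.le (by linarith : (0:ℝ) ≤ H) hH2.le; linarith
  have hhH_pos : (0:ℝ) < h ^ H := Real.rpow_pos_of_pos hh _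
  have hh_split : h ^ (1 - H) * h ^ H = h := by
    rw [← Real.rpow_add hh]
    norm_num
  -- decompose
  have hdecomp : (t + h) ^ H * gy - t ^ H * gx =
      ((t + h) ^ H - t ^ H) * gy - t ^ H * (gx - gy) := by ring
  rw [hdecomp]
  have habs : |((t + h) ^ H - t ^ H) * gy - t ^ H * (gx - gy)| ≤
      ((t + h) ^ H - t ^ H) * gy + t ^ H * (gx - gy) := by
    have h1 : 0 ≤ ((t + h) ^ H - t ^ H) * gy := by
      apply mul_nonneg <;> linarith
    have h2 : 0 ≤ t ^ H * (gx - gy) := by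
      apply mul_nonneg <;> linarith
    exact abs_sub_le_iff.2 ⟨by linarith, by linarith⟩
  refine le_trans habs ?_
  have hterm1 : ((t + h) ^ H - t ^ H) * gy ≤ h ^ H := by
    calc ((t + h) ^ H - t ^ H) * gy ≤ ((t + h) ^ H - t ^ H) * 1 := by
          apply mul_le_mul_of_nonneg_left hgy_le_one (by linarith)
      _ = (t + h) ^ H - t ^ H := mul_one _
      _ ≤ h ^ H := hpow
  have hterm2 : t ^ H * (gx - gy) ≤ 2 * lam * t ^ H * (h ^ (1 - H) * h ^ H) := by
    rw [hh_split]
    have hyx : y - x = lam * h := by rw [hxdef, hydef]; ring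
    calc t ^ H * (gx - gy) ≤ t ^ H * (2 * (y - x)) :=
          mul_le_mul_of_nonneg_left hg_lip htH
      _ = 2 * lam * t ^ H * h := by rw [hyx]; ring
  have hnn : 0 ≤ lam * t ^ H * h ^ (1 - H) := by
    apply mul_nonneg (mul_nonneg hlam htH) (Real.rpow_nonneg hh.le _)
  nlinarith
end

section
/- Let $H \in [1/2, 1)$ and $t \ge 0$. Then there exists a constant $C > 0$ depending only on $H$ and $t$ such that for all $\lambda \ge 0$ and all $h \in (0, 1]$, $\big| \sigma_\lambda^H(t+h) - \sigma_\lambda^H(t) \big| \le C (1 + \lambda) h^{H}$. (This is the deterministic content of Corollary 4.5, which gives a common upper bound, valid for all $H \in [1/2,1)$, on the increments in time of the standard deviation of the fractional stochastic integral $\int_0^t e^{-\lambda(t-u)} dB^H(u)$.) -/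
open Real intervalIntegral

lemma contAux (mu q : ℝ) (hq : 0 ≤ q) :
    Continuous fun s : ℝ => Real.exp (mu * s) * s ^ q := by
  apply Continuous.mul
  · exact Real.continuous_exp.comp (continuous_const.mul continuous_id)
  · exact continuous_iff_continuousAt.2 fun x => Real.continuousAt_rpow_const x q (Or.inr hq)

lemma contPow (q : ℝ) (hq : 0 ≤ q) : Continuous fun s : ℝ => s ^ q :=
  continuous_iff_continuousAt.2 fun x => Real.continuousAt_rpow_const x q (Or.inr hq)

lemma intAux (mu q a b : ℝ) (hq : 0 ≤ q) :
    IntervalIntegrable (fun s : ℝ => Real.exp (mu * s) * s ^ q) MeasureTheory.volume a b :=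
  (contAux mu q hq).intervalIntegrable a b

lemma intPow (q a b : ℝ) (hq : 0 ≤ q) :
    IntervalIntegrable (fun s : ℝ => s ^ q) MeasureTheory.volume a b :=
  (contPow q hq).intervalIntegrable a b

lemma substAux (mu q t : ℝ) (hq : 0 ≤ q) (ht : 0 < t) :
    t ^ (q + 1) * ∫ u in (0:ℝ)..1, Real.exp (mu * t * u) * u ^ q
      = ∫ s in (0:ℝ)..t, Real.exp (mu * s) * s ^ q := by
  have h1 : (∫ u in (0:ℝ)..1, (fun s => Real.exp (mu * s) * s ^ q) (t * u))
      = t⁻¹ • ∫ s in (0:ℝ)..t, Real.exp (mu * s) * s ^ q := by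
    have := intervalIntegral.integral_comp_mul_left (a := (0:ℝ)) (b := 1)
      (fun s => Real.exp (mu * s) * s ^ q) (ne_of_gt ht)
    simpa using this
  have h2 : (∫ u in (0:ℝ)..1, (fun s => Real.exp (mu * s) * s ^ q) (t * u))
      = t ^ q * ∫ u in (0:ℝ)..1, Real.exp (mu * t * u) * u ^ q := by
    rw [← intervalIntegral.integral_const_mul]
    apply intervalIntegral.integral_congr
    intro u hu
    have hu0 : 0 ≤ u := by
      rcases Set.mem_uIcc.1 hu with h | h
      · exact h.1
      · linarith [h.1]
    simp only
    rw [Real.mul_rpow ht.le hu0]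
    ring_nf
  have h3 : t ^ (q + 1) = t * t ^ q := by
    rw [Real.rpow_add ht, Real.rpow_one]; ring
  rw [h3]
  rw [h2] at h1
  rw [smul_eq_mul] at h1
  field_simp at h1 ⊢
  nlinarith [h1]

lemma sqrt_sub_sqrt_le {a b D : ℝ} (ha : 0 ≤ a) (hb : 0 < b) (hD : 0 ≤ D)
    (h : a - b ≤ D) : Real.sqrt a - Real.sqrt b ≤ D / Real.sqrt b := by
  rcases le_or_gt a b with hab | hab
  · have h1 : Real.sqrt a ≤ Real.sqrt b := Real.sqrt_le_sqrt hab
    have : Real.sqrt a - Real.sqrt b ≤ 0 := by linarith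
    exact this.trans (div_nonneg hD (Real.sqrt_nonneg b))
  · have hsb : 0 < Real.sqrt b := Real.sqrt_pos.2 hb
    have hsa : Real.sqrt b ≤ Real.sqrt a := Real.sqrt_le_sqrt hab.le
    have h3 : Real.sqrt a * Real.sqrt a = a := Real.mul_self_sqrt ha
    have h4 : Real.sqrt b * Real.sqrt b = b := Real.mul_self_sqrt hb.le
    have key : (Real.sqrt a - Real.sqrt b) * Real.sqrt b ≤ D := by
      nlinarith [Real.sqrt_nonneg a, Real.sqrt_nonneg b]
    exact (le_div_iff₀ hsb).2 key

lemma expInt_le₁ (lam q x y : ℝ) (hlam : 0 ≤ lam) (hq : 0 ≤ q) (hx : 0 ≤ x) (hxy : x ≤ y) :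
    Real.exp (-2 * lam * y) * ∫ s in x..y, Real.exp (lam * s) * s ^ q ≤ ∫ s in x..y, s ^ q := by
  rw [← intervalIntegral.integral_const_mul]
  apply intervalIntegral.integral_mono_on hxy ((intAux lam q x y hq).const_mul _) (intPow q x y hq)
  intro s hs
  have hs0 : 0 ≤ s := hx.trans hs.1
  have h1 : Real.exp (-2 * lam * y) * Real.exp (lam * s) ≤ 1 := by
    rw [← Real.exp_add]
    apply Real.exp_le_one_iff.2
    nlinarith [hs.2, hx.trans hxy]
  have h2 : (0:ℝ) ≤ s ^ q := Real.rpow_nonneg hs0 q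
  nlinarith [Real.exp_pos (lam * s), Real.exp_pos (-2 * lam * y)]

lemma expInt_le₂ (lam q x y : ℝ) (hlam : 0 ≤ lam) (hq : 0 ≤ q) (hx : 0 ≤ x) (hxy : x ≤ y) :
    (∫ s in x..y, Real.exp (-lam * s) * s ^ q) ≤ ∫ s in x..y, s ^ q := by
  apply intervalIntegral.integral_mono_on hxy (intAux (-lam) q x y hq) (intPow q x y hq)
  intro s hs
  have hs0 : 0 ≤ s := hx.trans hs.1
  have h1 : Real.exp (-lam * s) ≤ 1 := Real.exp_le_one_iff.2 (by nlinarith)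
  have h2 : (0:ℝ) ≤ s ^ q := Real.rpow_nonneg hs0 q
  nlinarith

lemma intPow_eval (q T : ℝ) (hq : 0 ≤ q) (hT : 0 ≤ T) :
    (∫ s in (0:ℝ)..T, s ^ q) = T ^ (q + 1) / (q + 1) := by
  rw [integral_rpow (Or.inl (by linarith))]
  rw [Real.zero_rpow (by linarith)]
  ring

lemma lowerAux (lam q t : ℝ) (hlam : 0 ≤ lam) (hq : 0 ≤ q) (ht : 0 < t) :
    Real.exp (-1) * (min t (1 + lam)⁻¹) ^ (q + 1) / (q + 1)
      ≤ ∫ s in (0:ℝ)..t, Real.exp (-lam * s) * s ^ q := by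
  set m := min t (1 + lam)⁻¹ with hm_def
  have hm0 : 0 < m := lt_min ht (by positivity)
  have hmt : m ≤ t := min_le_left _ _
  have hsplit : (∫ s in (0:ℝ)..m, Real.exp (-lam * s) * s ^ q)
      + (∫ s in m..t, Real.exp (-lam * s) * s ^ q)
      = ∫ s in (0:ℝ)..t, Real.exp (-lam * s) * s ^ q :=
    intervalIntegral.integral_add_adjacent_intervals (intAux (-lam) q 0 m hq) (intAux (-lam) q m t hq)
  have h2 : 0 ≤ ∫ s in m..t, Real.exp (-lam * s) * s ^ q := by
    apply intervalIntegral.integral_nonneg hmt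
    intro u hu
    exact mul_nonneg (Real.exp_nonneg _) (Real.rpow_nonneg (hm0.le.trans hu.1) q)
  have h3 : Real.exp (-1) * (∫ s in (0:ℝ)..m, s ^ q)
      ≤ ∫ s in (0:ℝ)..m, Real.exp (-lam * s) * s ^ q := by
    rw [← intervalIntegral.integral_const_mul]
    apply intervalIntegral.integral_mono_on hm0.le ((intPow q 0 m hq).const_mul _)
      (intAux (-lam) q 0 m hq)
    intro s hs
    have hs0 : 0 ≤ s := hs.1
    have hlm : lam * m ≤ 1 := by
      have h4 : lam * m ≤ lam * (1 + lam)⁻¹ :=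
        mul_le_mul_of_nonneg_left (min_le_right _ _) hlam
      have h5 : lam * (1 + lam)⁻¹ ≤ (1 + lam) * (1 + lam)⁻¹ :=
        mul_le_mul_of_nonneg_right (by linarith) (by positivity)
      rw [mul_inv_cancel₀ (by positivity : (1:ℝ) + lam ≠ 0)] at h5
      linarith
    have : Real.exp (-1) ≤ Real.exp (-lam * s) := by
      apply Real.exp_le_exp.2
      nlinarith [hs.2, mul_le_mul_of_nonneg_left hs.2 hlam]
    exact mul_le_mul_of_nonneg_right this (Real.rpow_nonneg hs0 q)
  rw [intPow_eval q m hq hm0.le] at h3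
  rw [← hsplit]
  calc Real.exp (-1) * m ^ (q+1) / (q+1) = Real.exp (-1) * (m ^ (q+1) / (q+1)) := by ring
  _ ≤ _ := by linarith

lemma sqrt_sub_sqrt_le' {a b D : ℝ} (ha : 0 ≤ a) (hb : 0 < b) (hD : 0 ≤ D)
    (h : b - a ≤ D) : Real.sqrt b - Real.sqrt a ≤ D / Real.sqrt b := by
  rcases le_or_gt b a with hab | hab
  · have h1 : Real.sqrt b ≤ Real.sqrt a := Real.sqrt_le_sqrt hab
    have : Real.sqrt b - Real.sqrt a ≤ 0 := by linarith
    exact this.trans (div_nonneg hD (Real.sqrt_nonneg b))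
  · have hsb : 0 < Real.sqrt b := Real.sqrt_pos.2 hb
    have hsa : Real.sqrt a ≤ Real.sqrt b := Real.sqrt_le_sqrt hab.le
    have h3 : Real.sqrt a * Real.sqrt a = a := Real.mul_self_sqrt ha
    have h4 : Real.sqrt b * Real.sqrt b = b := Real.mul_self_sqrt hb.le
    have key : (Real.sqrt b - Real.sqrt a) * Real.sqrt b ≤ D := by
      nlinarith [Real.sqrt_nonneg a, Real.sqrt_nonneg b]
    exact (le_div_iff₀ hsb).2 key

lemma repAux (H lam tau : ℝ) (hH : 1/2 ≤ H) (htau : 0 < tau) :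
    sigmaH H lam tau = Real.sqrt (H *
      (Real.exp (-2 * lam * tau) * (∫ s in (0:ℝ)..tau, Real.exp (lam * s) * s ^ (2*H-1))
        + ∫ s in (0:ℝ)..tau, Real.exp (-lam * s) * s ^ (2*H-1))) := by
  have hq0 : (0:ℝ) ≤ 2*H-1 := by linarith
  have e1 := substAux lam (2*H-1) tau hq0 htau
  have e2 := substAux (-lam) (2*H-1) tau hq0 htau
  have hq1 : (2*H-1) + 1 = 2*H := by ring
  rw [hq1] at e1 e2
  unfold sigmaH
  congr 1
  linear_combination Real.exp (-2*lam*tau) * H * e1 + H * e2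

set_option maxHeartbeats 1000000 in
/-- Deterministic content of Corollary 4.5: a common upper bound, valid for all
`H ∈ [1/2, 1)`, on the increments in time of `σ_λ^H`. -/
theorem sigmaH_increment_uniform_le (H t : ℝ) (hH : H ∈ Set.Ico (1/2 : ℝ) 1) (ht : 0 ≤ t) :
    ∃ C > (0 : ℝ), ∀ lam ≥ (0 : ℝ), ∀ h ∈ Set.Ioc (0 : ℝ) 1,
      |sigmaH H lam (t + h) - sigmaH H lam t| ≤ C * (1 + lam) * h ^ H := by
  obtain ⟨hH1, hH2⟩ := hH
  have hq0 : (0:ℝ) ≤ 2*H-1 := by linarith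
  have hq1 : (2*H-1) + 1 = 2*H := by ring
  have hHpos : 0 < H := by linarith
  rcases ht.eq_or_lt with heq | htpos
  · -- t = 0
    refine ⟨1, one_pos, ?_⟩
    intro lam hlam h hh
    obtain ⟨hh0, hh1⟩ := hh
    have hz : sigmaH H lam t = 0 := by
      unfold sigmaH
      rw [← heq, Real.zero_rpow (by positivity : 2*H ≠ 0)]
      simp
    rw [hz, sub_zero, ← heq, zero_add]
    rw [repAux H lam h hH1 hh0]
    rw [abs_of_nonneg (Real.sqrt_nonneg _)]
    have hEJ := expInt_le₁ lam (2*H-1) 0 h hlam hq0 le_rfl hh0.le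
    have hJ2 := expInt_le₂ lam (2*H-1) 0 h hlam hq0 le_rfl hh0.le
    have hval := intPow_eval (2*H-1) h hq0 hh0.le
    rw [hval, hq1] at hEJ hJ2
    have hsum : H * (Real.exp (-2*lam*h) * (∫ s in (0:ℝ)..h, Real.exp (lam * s) * s ^ (2*H-1))
        + ∫ s in (0:ℝ)..h, Real.exp (-lam * s) * s ^ (2*H-1)) ≤ h ^ (2*H) := by
      have hmul := mul_le_mul_of_nonneg_left (add_le_add hEJ hJ2) hHpos.le
      have hid : H * (h ^ (2*H) / (2*H) + h ^ (2*H) / (2*H)) = h ^ (2*H) := by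
        field_simp
        ring
      linarith
    have hsq : Real.sqrt (h ^ (2*H)) = h ^ H := by
      rw [show (2*H : ℝ) = H + H by ring, Real.rpow_add hh0, ← sq,
        Real.sqrt_sq (Real.rpow_nonneg hh0.le H)]
    calc Real.sqrt _ ≤ Real.sqrt (h ^ (2*H)) := Real.sqrt_le_sqrt hsum
    _ = h ^ H := hsq
    _ ≤ 1 * (1 + lam) * h ^ H := by
        nlinarith [Real.rpow_nonneg hh0.le H]
  · -- 0 < t
    set c : ℝ := Real.sqrt (Real.exp (-1) / 2) with hc_def
    have hcpos : 0 < c := by rw [hc_def]; exact Real.sqrt_pos.2 (by positivity)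
    set K1 : ℝ := 2*H*(t+1)^(2*H-1) / c * ((t⁻¹)^H + 1) with hK1_def
    have hK1 : 0 ≤ K1 := by
      apply mul_nonneg
      · apply div_nonneg _ hcpos.le
        exact mul_nonneg (by linarith) (Real.rpow_nonneg (by linarith) _)
      · positivity
    have hCpos : 0 < K1 + 2*t^H + 1 := by
      have : (0:ℝ) ≤ t^H := Real.rpow_nonneg ht H
      linarith
    refine ⟨K1 + 2*t^H + 1, hCpos, ?_⟩
    intro lam hlam h hh
    obtain ⟨hh0, hh1⟩ := hh
    have hth : 0 < t + h := by linarith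
    set A := ∫ s in (0:ℝ)..t, Real.exp (lam * s) * s ^ (2*H-1) with hA_def
    set B := ∫ s in (0:ℝ)..t, Real.exp (-lam * s) * s ^ (2*H-1) with hB_def
    set A' := ∫ s in t..(t+h), Real.exp (lam * s) * s ^ (2*H-1) with hA'_def
    set B' := ∫ s in t..(t+h), Real.exp (-lam * s) * s ^ (2*H-1) with hB'_def
    have hApos : 0 < A := by
      rw [hA_def]
      apply intervalIntegral_pos_of_pos_on (intAux lam (2*H-1) 0 t hq0) _ htpos
      intro x hx
      exact mul_pos (Real.exp_pos _) (Real.rpow_pos_of_pos hx.1 _)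
    have hB0 : 0 ≤ B := by
      rw [hB_def]
      exact intervalIntegral.integral_nonneg htpos.le
        (fun u hu => mul_nonneg (Real.exp_nonneg _) (Real.rpow_nonneg hu.1 _))
    have hA'0 : 0 ≤ A' := by
      rw [hA'_def]
      exact intervalIntegral.integral_nonneg (by linarith)
        (fun u hu => mul_nonneg (Real.exp_nonneg _) (Real.rpow_nonneg (htpos.le.trans hu.1) _))
    have hB'0 : 0 ≤ B' := by
      rw [hB'_def]
      exact intervalIntegral.integral_nonneg (by linarith)
        (fun u hu => mul_nonneg (Real.exp_nonneg _) (Real.rpow_nonneg (htpos.le.trans hu.1) _))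
    have splitA := intervalIntegral.integral_add_adjacent_intervals
      (intAux lam (2*H-1) 0 t hq0) (intAux lam (2*H-1) t (t+h) hq0)
    have splitB := intervalIntegral.integral_add_adjacent_intervals
      (intAux (-lam) (2*H-1) 0 t hq0) (intAux (-lam) (2*H-1) t (t+h) hq0)
    rw [← hA_def, ← hA'_def] at splitA
    rw [← hB_def, ← hB'_def] at splitB
    -- pointwise comparison bounds
    have hEA' : Real.exp (-2*lam*(t+h)) * A' ≤ ∫ s in t..(t+h), s^(2*H-1) := by
      rw [hA'_def]
      exact expInt_le₁ lam (2*H-1) t (t+h) hlam hq0 htpos.le (by linarith)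
    have hB'le : B' ≤ ∫ s in t..(t+h), s^(2*H-1) := by
      rw [hB'_def]
      exact expInt_le₂ lam (2*H-1) t (t+h) hlam hq0 htpos.le (by linarith)
    have hJle : (∫ s in t..(t+h), s^(2*H-1)) ≤ h * (t+1)^(2*H-1) := by
      have hmono : ∀ s ∈ Set.Icc t (t+h), s^(2*H-1) ≤ (t+1)^(2*H-1) := fun s hs =>
        Real.rpow_le_rpow (htpos.le.trans hs.1) (by linarith [hs.2]) hq0
      have hcm := intervalIntegral.integral_mono_on (by linarith : t ≤ t+h)
        (intPow (2*H-1) t (t+h) hq0) intervalIntegrable_const hmono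
      rw [intervalIntegral.integral_const, smul_eq_mul, show t+h-t = h by ring] at hcm
      exact hcm
    -- bounds on b = H * (exp(-2 lam t) * A + B)
    have hb2pos : 0 < H * (Real.exp (-2*lam*t) * A) :=
      mul_pos hHpos (mul_pos (Real.exp_pos _) hApos)
    have hbpos : 0 < H * (Real.exp (-2*lam*t) * A + B) := by
      rw [show H * (Real.exp (-2*lam*t) * A + B)
        = H*(Real.exp (-2*lam*t)*A) + H*B from by ring]
      linarith [mul_nonneg hHpos.le hB0, hb2pos]
    have hEAle : Real.exp (-2*lam*t) * A ≤ t^(2*H)/(2*H) := by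
      have hx := expInt_le₁ lam (2*H-1) 0 t hlam hq0 le_rfl htpos.le
      rw [← hA_def, intPow_eval (2*H-1) t hq0 htpos.le, hq1] at hx
      exact hx
    have hb2le : H * (Real.exp (-2*lam*t) * A) ≤ t^(2*H) := by
      have h5 := mul_le_mul_of_nonneg_left hEAle hHpos.le
      have h6 : H * (t^(2*H)/(2*H)) = t^(2*H)/2 := by field_simp
      nlinarith [Real.rpow_nonneg htpos.le (2*H)]
    set m := min t (1+lam)⁻¹ with hm_def
    have hm0 : 0 < m := lt_min htpos (by positivity)
    have hBlow : Real.exp (-1) * m^(2*H) / (2*H) ≤ B := by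
      have hx := lowerAux lam (2*H-1) t hlam hq0 htpos
      rw [hq1, ← hm_def, ← hB_def] at hx
      exact hx
    have hb1pos : 0 < Real.exp (-1) * m^(2*H) / 2 :=
      div_pos (mul_pos (Real.exp_pos _) (Real.rpow_pos_of_pos hm0 _)) two_pos
    have hb1le : Real.exp (-1) * m^(2*H)/2 ≤ H * (Real.exp (-2*lam*t)*A + B) := by
      have h7 : H * (Real.exp (-1) * m^(2*H)/(2*H)) = Real.exp (-1)*m^(2*H)/2 := by
        field_simp
      have h8 := mul_le_mul_of_nonneg_left hBlow hHpos.le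
      rw [h7] at h8
      rw [show H * (Real.exp (-2*lam*t)*A + B)
        = H*(Real.exp (-2*lam*t)*A) + H*B from by ring]
      linarith [hb2pos]
    -- exponential estimates
    have hE'eq : Real.exp (-2*lam*(t+h)) = Real.exp (-2*lam*t) * Real.exp (-(2*lam*h)) := by
      rw [show -2*lam*(t+h) = -2*lam*t + -(2*lam*h) from by ring, Real.exp_add]
    have hexp1 : 1 - Real.exp (-(2*lam*h)) ≤ 2*lam*h := by
      linarith [Real.one_sub_le_exp_neg (2*lam*h)]
    have hexp0 : Real.exp (-(2*lam*h)) ≤ 1 :=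
      Real.exp_le_one_iff.2 (by linarith [mul_nonneg hlam hh0.le])
    have hEE' : Real.exp (-2*lam*(t+h)) ≤ Real.exp (-2*lam*t) :=
      Real.exp_le_exp.2 (by linarith [mul_nonneg hlam hh0.le])
    -- P and N bounds
    have hP0 : 0 ≤ H * (Real.exp (-2*lam*(t+h))*A' + B') :=
      mul_nonneg hHpos.le (add_nonneg (mul_nonneg (Real.exp_nonneg _) hA'0) hB'0)
    have hN0 : 0 ≤ H * ((Real.exp (-2*lam*t) - Real.exp (-2*lam*(t+h)))*A) := by
      apply mul_nonneg hHpos.le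
      exact mul_nonneg (by linarith) hApos.le
    have hPle : H * (Real.exp (-2*lam*(t+h))*A' + B') ≤ 2*H*(h*(t+1)^(2*H-1)) := by
      nlinarith [mul_le_mul_of_nonneg_left (add_le_add hEA' hB'le) hHpos.le,
        mul_le_mul_of_nonneg_left hJle (by linarith : (0:ℝ) ≤ 2*H)]
    have hNle : H * ((Real.exp (-2*lam*t) - Real.exp (-2*lam*(t+h)))*A)
        ≤ 2*lam*h*(H*(Real.exp (-2*lam*t)*A)) := by
      have key := mul_le_mul_of_nonneg_left hexp1 hb2pos.le
      rw [hE'eq]; nlinarith [key]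
    -- rewrite goal
    rw [repAux H lam (t+h) hH1 hth, repAux H lam t hH1 htpos,
      ← splitA, ← splitB, ← hA_def, ← hB_def]
    have ha0 : 0 ≤ H * (Real.exp (-2*lam*(t+h))*(A+A') + (B+B')) :=
      mul_nonneg hHpos.le (add_nonneg (mul_nonneg (Real.exp_nonneg _) (by linarith))
        (by linarith))
    have s1 : Real.sqrt (H * (Real.exp (-2*lam*(t+h))*(A+A') + (B+B')))
        - Real.sqrt (H * (Real.exp (-2*lam*t)*A + B))
        ≤ H * (Real.exp (-2*lam*(t+h))*A' + B')
          / Real.sqrt (H * (Real.exp (-2*lam*t)*A + B)) := by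
      apply sqrt_sub_sqrt_le ha0 hbpos hP0
      nlinarith [mul_nonneg (mul_nonneg hHpos.le hApos.le) (sub_nonneg.2 hEE')]
    have s2 : Real.sqrt (H * (Real.exp (-2*lam*t)*A + B))
        - Real.sqrt (H * (Real.exp (-2*lam*(t+h))*(A+A') + (B+B')))
        ≤ H * ((Real.exp (-2*lam*t) - Real.exp (-2*lam*(t+h)))*A)
          / Real.sqrt (H * (Real.exp (-2*lam*t)*A + B)) := by
      apply sqrt_sub_sqrt_le' ha0 hbpos hN0
      nlinarith [hP0]
    -- denominator computations
    have hmsq : (m^H)^2 = m^(2*H) := by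
      rw [sq, ← Real.rpow_add hm0]; ring_nf
    have hsb1 : Real.sqrt (Real.exp (-1)*m^(2*H)/2) = c * m^H := by
      rw [show Real.exp (-1)*m^(2*H)/2 = Real.exp (-1)/2 * (m^H)^2 from by rw [hmsq]; ring,
        Real.sqrt_mul (by positivity) _, Real.sqrt_sq (Real.rpow_nonneg hm0.le H), hc_def]
    have hden1 : c * m^H ≤ Real.sqrt (H * (Real.exp (-2*lam*t)*A + B)) := by
      rw [← hsb1]; exact Real.sqrt_le_sqrt hb1le
    have hden1pos : 0 < c * m^H := mul_pos hcpos (Real.rpow_pos_of_pos hm0 _)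
    have d1 : H * (Real.exp (-2*lam*(t+h))*A' + B')
          / Real.sqrt (H * (Real.exp (-2*lam*t)*A + B))
        ≤ (2*H*(h*(t+1)^(2*H-1))) / (c * m^H) :=
      div_le_div₀ (by positivity) hPle hden1pos hden1
    have hb2leb : H * (Real.exp (-2*lam*t)*A) ≤ H * (Real.exp (-2*lam*t)*A + B) := by
      rw [show H * (Real.exp (-2*lam*t)*A + B)
        = H*(Real.exp (-2*lam*t)*A) + H*B from by ring]
      linarith [mul_nonneg hHpos.le hB0]
    have hsb2 : Real.sqrt (H * (Real.exp (-2*lam*t)*A)) ≤ t^H := by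
      rw [Real.sqrt_le_left (Real.rpow_nonneg ht H)]
      rw [sq, ← Real.rpow_add htpos, show H + H = 2*H by ring]
      exact hb2le
    have d2 : H * ((Real.exp (-2*lam*t) - Real.exp (-2*lam*(t+h)))*A)
          / Real.sqrt (H * (Real.exp (-2*lam*t)*A + B))
        ≤ 2*lam*h*(t^H) := by
      have step : H * ((Real.exp (-2*lam*t) - Real.exp (-2*lam*(t+h)))*A)
            / Real.sqrt (H * (Real.exp (-2*lam*t)*A + B))
          ≤ (2*lam*h*(H*(Real.exp (-2*lam*t)*A))) / Real.sqrt (H*(Real.exp (-2*lam*t)*A)) :=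
        div_le_div₀ (by positivity) hNle (Real.sqrt_pos.2 hb2pos) (Real.sqrt_le_sqrt hb2leb)
      have hq2 : (2*lam*h*(H*(Real.exp (-2*lam*t)*A))) / Real.sqrt (H*(Real.exp (-2*lam*t)*A))
          = 2*lam*h*Real.sqrt (H*(Real.exp (-2*lam*t)*A)) := by
        rw [mul_div_assoc, Real.div_sqrt]
      rw [hq2] at step
      calc _ ≤ 2*lam*h*Real.sqrt (H*(Real.exp (-2*lam*t)*A)) := step
      _ ≤ 2*lam*h*(t^H) := by
          apply mul_le_mul_of_nonneg_left hsb2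
          positivity
    -- final numeric estimates
    have hhH : h ≤ h^H := by
      have hx := Real.rpow_le_rpow_of_exponent_ge hh0 hh1 hH2.le
      rw [Real.rpow_one] at hx
      exact hx
    have term2 : 2*lam*h*(t^H) ≤ 2*t^H*(1+lam)*h^H := by
      have e1 : lam * h ≤ lam * h^H := mul_le_mul_of_nonneg_left hhH hlam
      have e2 : lam * h^H ≤ (1+lam) * h^H :=
        mul_le_mul_of_nonneg_right (by linarith) (Real.rpow_nonneg hh0.le H)
      have e4 := mul_le_mul_of_nonneg_left (e1.trans e2)
        (by positivity : (0:ℝ) ≤ 2*t^H)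
      calc 2*lam*h*(t^H) = 2*t^H*(lam*h) := by ring
      _ ≤ 2*t^H*((1+lam)*h^H) := e4
      _ = 2*t^H*(1+lam)*h^H := by ring
    have hmne : m^H ≠ 0 := (Real.rpow_pos_of_pos hm0 H).ne'
    have hminv : (m^H)⁻¹ ≤ ((t⁻¹)^H + 1) * (1+lam)^H := by
      have h1l : (1:ℝ) ≤ (1+lam)^H := Real.one_le_rpow (by linarith) (by linarith)
      have hx0 : 0 ≤ (t⁻¹)^H := Real.rpow_nonneg (inv_nonneg.2 htpos.le) H
      rcases le_total t (1+lam)⁻¹ with hct | hct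
      · rw [hm_def, min_eq_left hct, ← Real.inv_rpow htpos.le]
        have h2 := mul_le_mul_of_nonneg_left h1l
          (by linarith : (0:ℝ) ≤ (t⁻¹)^H + 1)
        linarith
      · rw [hm_def, min_eq_right hct, Real.inv_rpow (by positivity), inv_inv]
        have h2 := mul_le_mul_of_nonneg_right
          (show (1:ℝ) ≤ (t⁻¹)^H + 1 by linarith)
          (Real.rpow_nonneg (by positivity : (0:ℝ) ≤ 1+lam) H)
        linarith
    have term1 : (2*H*(h*(t+1)^(2*H-1))) / (c * m^H) ≤ K1*(1+lam)*h^H := by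
      have heq1 : (2*H*(h*(t+1)^(2*H-1))) / (c * m^H)
          = (2*H*(t+1)^(2*H-1)/c) * ((m^H)⁻¹ * h) := by
        field_simp
      have hK0 : 0 ≤ 2*H*(t+1)^(2*H-1)/c :=
        div_nonneg (mul_nonneg (by linarith) (Real.rpow_nonneg (by linarith) _)) hcpos.le
      have e3 : (1+lam)^H ≤ 1+lam := by
        have hx := Real.rpow_le_rpow_of_exponent_le (by linarith : (1:ℝ) ≤ 1+lam) hH2.le
        rw [Real.rpow_one] at hx
        exact hx
      calc (2*H*(h*(t+1)^(2*H-1))) / (c * m^H)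
          = (2*H*(t+1)^(2*H-1)/c) * ((m^H)⁻¹ * h) := heq1
      _ ≤ (2*H*(t+1)^(2*H-1)/c) * ((((t⁻¹)^H + 1) * (1+lam)^H) * h) := by
          apply mul_le_mul_of_nonneg_left _ hK0
          exact mul_le_mul_of_nonneg_right hminv hh0.le
      _ = K1 * ((1+lam)^H * h) := by rw [hK1_def]; ring
      _ ≤ K1 * ((1+lam) * h^H) := by
          apply mul_le_mul_of_nonneg_left _ hK1
          exact mul_le_mul e3 hhH hh0.le (by linarith)
      _ = K1*(1+lam)*h^H := by ring
    have hterm2nn : 0 ≤ 2*lam*h*(t^H) := by positivity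
    have hterm1nn : 0 ≤ (2*H*(h*(t+1)^(2*H-1))) / (c * m^H) := by
      apply div_nonneg _ hden1pos.le
      exact mul_nonneg (by linarith)
        (mul_nonneg hh0.le (Real.rpow_nonneg (by linarith) _))
    have habs : |Real.sqrt (H * (Real.exp (-2*lam*(t+h))*(A+A') + (B+B')))
        - Real.sqrt (H * (Real.exp (-2*lam*t)*A + B))|
        ≤ (2*H*(h*(t+1)^(2*H-1))) / (c * m^H) + 2*lam*h*(t^H) := by
      apply abs_sub_le_iff.2
      constructor
      · linarith [s1, d1]
      · linarith [s2, d2]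
    have hfin : (2*H*(h*(t+1)^(2*H-1))) / (c * m^H) + 2*lam*h*(t^H)
        ≤ (K1 + 2*t^H + 1)*(1+lam)*h^H := by
      have hnn : 0 ≤ (1+lam)*h^H :=
        mul_nonneg (by linarith) (Real.rpow_nonneg hh0.le H)
      rw [show (K1+2*t^H+1)*(1+lam)*h^H
        = K1*(1+lam)*h^H + 2*t^H*(1+lam)*h^H + (1+lam)*h^H from by ring]
      linarith [term1, term2]
    linarith [habs, hfin]
end
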